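/- For every $\varepsilon > 0$ and every finite-dimensional real normed vector space $V$, there exists a constant $c_\varepsilon \in (0,1)$ such that for every $\varepsilon$-proximal linear transformation $g$ of $V$, one has $c_\varepsilon \|g\| \leq \lambda_1(g) \leq \|g\|$, where $\lambda_1(g)$ is the maximal modulus of the (complex) eigenvalues of $g$ and $\|g\|$ is the operator norm. -/

import Mathlib

open Filter Topology

variable {V : Type*} [NormedAddCommGroup V] [NormedSpace ℝ V]

/-- The distance between two lines (points of `ℙ(V)`), viewed as submodules:
`d(x₁, x₂) = inf {‖v₁ - v₂‖ : vᵢ ∈ xᵢ, ‖vᵢ‖ = 1}`. -/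
noncomputable def projDist (x₁ x₂ : Submodule ℝ V) : ℝ :=
  sInf {r : ℝ | ∃ v₁ ∈ x₁, ∃ v₂ ∈ x₂, ‖v₁‖ = 1 ∧ ‖v₂‖ = 1 ∧ r = ‖v₁ - v₂‖}

/-- The distance `δ(x, ℙ(W))` from a line `x` to the projectivization of a subspace `W`. -/
noncomputable def projDelta (x W : Submodule ℝ V) : ℝ :=
  sInf {r : ℝ | ∃ y : Submodule ℝ V, y ≤ W ∧ Module.finrank ℝ y = 1 ∧ r = projDist x y}

/-- The spectral radius of an endomorphism, via Gelfand's formula; in finite dimension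
this is the maximal modulus `λ₁(g)` of the complex eigenvalues of `g`. -/
noncomputable def specRad (g : V →L[ℝ] V) : ℝ :=
  Filter.limsup (fun n : ℕ => ‖g ^ n‖ ^ ((1 : ℝ) / n)) Filter.atTop

/-- `g` is proximal with top (real) eigenvalue `α`, attracting eigenvector `v`, and
invariant complementary hyperplane `W` on which the spectral radius is `< |α|`; this says
exactly that `α` is the unique eigenvalue of maximal modulus and has multiplicity one. -/
def IsProximalWith (g : V →L[ℝ] V) (α : ℝ) (v : V) (W : Submodule ℝ V) : Prop :=
  v ≠ 0 ∧ g v = α • v ∧ IsCompl (Submodule.span ℝ {v}) W ∧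
  ∃ gW : W →L[ℝ] W, (∀ w : W, g (w : V) = (gW w : V)) ∧ specRad gW < |α|

/-- `g` is `ε`-proximal with data `(α, v, W)`: it is proximal, `δ(x_g⁺, X_g^<) ≥ 2ε`,
`g` maps `B_g^ε` into `b_g^ε`, and `g` is `ε`-Lipschitz on `B_g^ε` (in `ℙ(V)`). -/
def IsEpsProximalWith (g : V →L[ℝ] V) (ε α : ℝ) (v : V) (W : Submodule ℝ V) : Prop :=
  IsProximalWith g α v W ∧ 2 * ε ≤ projDelta (Submodule.span ℝ {v}) W ∧
  (∀ x : Submodule ℝ V, Module.finrank ℝ x = 1 → ε ≤ projDelta x W →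
    Submodule.map (g : V →ₗ[ℝ] V) x ≠ ⊥ ∧
      projDist (Submodule.map (g : V →ₗ[ℝ] V) x) (Submodule.span ℝ {v}) ≤ ε) ∧
  (∀ x y : Submodule ℝ V, Module.finrank ℝ x = 1 → Module.finrank ℝ y = 1 →
    ε ≤ projDelta x W → ε ≤ projDelta y W →
    projDist (Submodule.map (g : V →ₗ[ℝ] V) x) (Submodule.map (g : V →ₗ[ℝ] V) y) ≤
      ε * projDist x y)

/-- `g` is `ε`-proximal. -/
def IsEpsProximal (g : V →L[ℝ] V) (ε : ℝ) : Prop :=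
  ∃ α v W, IsEpsProximalWith g ε α v W

section Helpers

variable {V : Type*} [NormedAddCommGroup V] [NormedSpace ℝ V]

lemma projDist_nonneg (x₁ x₂ : Submodule ℝ V) : 0 ≤ projDist x₁ x₂ := by
  apply Real.sInf_nonneg
  rintro r ⟨v₁, -, v₂, -, -, -, rfl⟩
  exact norm_nonneg _

lemma projDist_le {x₁ x₂ : Submodule ℝ V} {v₁ v₂ : V} (h₁ : v₁ ∈ x₁) (h₂ : v₂ ∈ x₂)
    (n₁ : ‖v₁‖ = 1) (n₂ : ‖v₂‖ = 1) : projDist x₁ x₂ ≤ ‖v₁ - v₂‖ := by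
  apply csInf_le
  · exact ⟨0, by rintro r ⟨w₁, -, w₂, -, -, -, rfl⟩; exact norm_nonneg _⟩
  · exact ⟨v₁, h₁, v₂, h₂, n₁, n₂, rfl⟩

lemma le_projDist {x₁ x₂ : Submodule ℝ V} {u₁ u₂ : V} {c : ℝ}
    (h₁ : u₁ ∈ x₁) (h₂ : u₂ ∈ x₂) (n₁ : ‖u₁‖ = 1) (n₂ : ‖u₂‖ = 1)
    (h : ∀ v₁ ∈ x₁, ∀ v₂ ∈ x₂, ‖v₁‖ = 1 → ‖v₂‖ = 1 → c ≤ ‖v₁ - v₂‖) :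
    c ≤ projDist x₁ x₂ := by
  unfold projDist
  refine le_csInf ?_ ?_
  · exact ⟨‖u₁ - u₂‖, u₁, h₁, u₂, h₂, n₁, n₂, rfl⟩
  rintro r ⟨v₁, m₁, v₂, m₂, k₁, k₂, rfl⟩
  exact h v₁ m₁ v₂ m₂ k₁ k₂

lemma projDelta_le {x W y : Submodule ℝ V} (hy : y ≤ W) (hr : Module.finrank ℝ y = 1) :
    projDelta x W ≤ projDist x y := by
  apply csInf_le
  · exact ⟨0, by rintro r ⟨z, -, -, rfl⟩; exact projDist_nonneg _ _⟩
  · exact ⟨y, hy, hr, rfl⟩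

lemma le_projDelta {x W : Submodule ℝ V} {c : ℝ}
    (hne : ∃ y : Submodule ℝ V, y ≤ W ∧ Module.finrank ℝ y = 1)
    (h : ∀ y : Submodule ℝ V, y ≤ W → Module.finrank ℝ y = 1 → c ≤ projDist x y) :
    c ≤ projDelta x W := by
  obtain ⟨y, hy, hr⟩ := hne
  unfold projDelta
  refine le_csInf ?_ ?_
  · exact ⟨projDist x y, y, hy, hr, rfl⟩
  rintro r ⟨z, hz, hzr, rfl⟩
  exact h z hz hzr

lemma normInvSmul {x : V} (hx : x ≠ 0) : ‖‖x‖⁻¹ • x‖ = 1 := by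
  rw [norm_smul, norm_inv, norm_norm, inv_mul_cancel₀ (norm_ne_zero_iff.2 hx)]

lemma projDelta_bot (x : Submodule ℝ V) : projDelta x (⊥ : Submodule ℝ V) = 0 := by
  have : {r : ℝ | ∃ y : Submodule ℝ V, y ≤ ⊥ ∧ Module.finrank ℝ y = 1 ∧ r = projDist x y} = ∅ := by
    ext r
    simp only [Set.mem_setOf_eq, Set.mem_empty_iff_false, iff_false, not_exists]
    rintro y ⟨hy, hr, -⟩
    rw [le_bot_iff] at hy
    subst hy
    simp [finrank_bot] at hr
  rw [projDelta, this, Real.sInf_empty]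

end Helpers

set_option maxHeartbeats 1000000 in
/-- Corollary 6.3: for every `ε > 0` there is `c_ε ∈ (0,1)` such that every `ε`-proximal
transformation `g` of `V` satisfies `c_ε ‖g‖ ≤ λ₁(g) ≤ ‖g‖`, where `λ₁(g)` is the maximal
modulus of the complex eigenvalues of `g` (given here by Gelfand's formula). -/
theorem stmt_14 [FiniteDimensional ℝ V] (ε : ℝ) (hε : 0 < ε) :
    ∃ c : ℝ, 0 < c ∧ c < 1 ∧ ∀ g : V →L[ℝ] V, IsEpsProximal g ε →
      c * ‖g‖ ≤ specRad g ∧ specRad g ≤ ‖g‖ := by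
  refine ⟨min (ε / 17) (1 / 2), by positivity,
    lt_of_le_of_lt (min_le_right _ _) (by norm_num), ?_⟩
  rintro g ⟨α, v, W, ⟨hv0, hgv, hcompl, gW, hgWeq, -⟩, hdelta, hmap, hlip⟩
  have hvpos : (0:ℝ) < ‖v‖ := norm_pos_iff.2 hv0
  have hεne : ε ≠ 0 := ne_of_gt hε
  set e : V := ‖v‖⁻¹ • v with he
  have hen : ‖e‖ = 1 := normInvSmul hv0
  have he0 : e ≠ 0 := by intro h; rw [h, norm_zero] at hen; norm_num at hen
  have hemem : e ∈ Submodule.span ℝ {v} :=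
    Submodule.smul_mem _ _ (Submodule.mem_span_singleton_self v)
  have hspan : Submodule.span ℝ {v} = Submodule.span ℝ {e} := by
    rw [he]
    exact (Submodule.span_singleton_smul_eq
      (IsUnit.mk0 _ (inv_ne_zero (ne_of_gt hvpos))) v).symm
  have hgW' : ∀ w ∈ W, g w ∈ W := by
    intro w hw
    have h2 : g w = ((gW ⟨w, hw⟩ : W) : V) := hgWeq ⟨w, hw⟩
    rw [h2]; exact Submodule.coe_mem _
  have key : ∀ w ∈ W, ‖w‖ = 1 → 2 * ε ≤ ‖e - w‖ := by
    intro w hw hwn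
    have hw0 : w ≠ 0 := by intro h; rw [h, norm_zero] at hwn; norm_num at hwn
    have h1 : projDelta (Submodule.span ℝ {v}) W
        ≤ projDist (Submodule.span ℝ {v}) (Submodule.span ℝ {w}) :=
      projDelta_le ((Submodule.span_singleton_le_iff_mem _ _).2 hw)
        (finrank_span_singleton hw0)
    have h2 : projDist (Submodule.span ℝ {v}) (Submodule.span ℝ {w}) ≤ ‖e - w‖ :=
      projDist_le hemem (Submodule.mem_span_singleton_self w) hen hwn
    linarith
  have hWne : W ≠ ⊥ := by
    intro h
    rw [h, projDelta_bot] at hdelta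
    linarith
  obtain ⟨w₀, hw₀W, hw₀0⟩ := Submodule.exists_mem_ne_zero_of_ne_bot hWne
  have hε1 : ε ≤ 1 := by
    have h1 := key (‖w₀‖⁻¹ • w₀) (Submodule.smul_mem _ _ hw₀W) (normInvSmul hw₀0)
    have h2 : ‖e - ‖w₀‖⁻¹ • w₀‖ ≤ 2 := by
      calc ‖e - ‖w₀‖⁻¹ • w₀‖ ≤ ‖e‖ + ‖‖w₀‖⁻¹ • w₀‖ := norm_sub_le _ _
      _ = 2 := by rw [hen, normInvSmul hw₀0]; norm_num
    linarith
  have keyA : ∀ w ∈ W, ε ≤ ‖e - w‖ := by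
    intro w hw
    rcases eq_or_ne w 0 with rfl | hw0
    · simpa [hen] using hε1
    · have hwpos : (0:ℝ) < ‖w‖ := norm_pos_iff.2 hw0
      have e7 : (1 - ‖w‖⁻¹) * ‖w‖ = ‖w‖ - 1 := by field_simp
      have h2 : ‖w - ‖w‖⁻¹ • w‖ ≤ ‖e - w‖ := by
        have e1 : w - ‖w‖⁻¹ • w = (1 - ‖w‖⁻¹) • w := by rw [sub_smul, one_smul]
        have e3 : |‖w‖ - 1| ≤ ‖e - w‖ := by
          have h := abs_norm_sub_norm_le w e
          rw [hen, norm_sub_rev] at h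
          exact h
        calc ‖w - ‖w‖⁻¹ • w‖ = |1 - ‖w‖⁻¹| * ‖w‖ := by
              rw [e1, norm_smul, Real.norm_eq_abs]
        _ = |(1 - ‖w‖⁻¹) * ‖w‖| := by rw [abs_mul, abs_of_pos hwpos]
        _ = |‖w‖ - 1| := by rw [e7]
        _ ≤ ‖e - w‖ := e3
      have h3 : ‖e - ‖w‖⁻¹ • w‖ ≤ ‖e - w‖ + ‖w - ‖w‖⁻¹ • w‖ :=
        norm_sub_le_norm_sub_add_norm_sub _ _ _
      have h4 := key (‖w‖⁻¹ • w) (Submodule.smul_mem _ _ hw) (normInvSmul hw0)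
      linarith
  have B1 : ∀ (t : ℝ), ∀ w ∈ W, ε * |t| ≤ ‖t • e + w‖ := by
    intro t w hw
    rcases eq_or_ne t 0 with rfl | ht
    · simp
    · have e1 : t • e + w = t • (e - (-(t⁻¹ • w))) := by
        rw [sub_neg_eq_add, smul_add, smul_smul t t⁻¹ w, mul_inv_cancel₀ ht, one_smul]
      rw [e1, norm_smul, Real.norm_eq_abs, mul_comm ε |t|]
      exact mul_le_mul_of_nonneg_left
        (keyA _ (Submodule.neg_mem _ (Submodule.smul_mem _ _ hw))) (abs_nonneg t)
  have B2 : ∀ (t : ℝ), ∀ w ∈ W, ε * ‖w‖ ≤ (1 + ε) * ‖t • e + w‖ := by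
    intro t w hw
    have h1 := B1 t w hw
    have h2 : ‖w‖ ≤ ‖t • e + w‖ + |t| := by
      have e1 : w = (t • e + w) - t • e := by abel
      calc ‖w‖ = ‖(t • e + w) - t • e‖ := by rw [← e1]
      _ ≤ ‖t • e + w‖ + ‖t • e‖ := norm_sub_le _ _
      _ = ‖t • e + w‖ + |t| := by rw [norm_smul, Real.norm_eq_abs, hen, mul_one]
    nlinarith [mul_le_mul_of_nonneg_left h2 hε.le]
  have hge : g e = α • e := by rw [he, map_smul, hgv, smul_comm]
  have hsv : Module.finrank ℝ (Submodule.span ℝ {v}) = 1 := finrank_span_singleton hv0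
  have hdv : ε ≤ projDelta (Submodule.span ℝ {v}) W := by linarith
  have hα : α ≠ 0 := by
    intro h
    refine (hmap _ hsv hdv).1 ?_
    rw [Submodule.map_span, Set.image_singleton]
    have h1 : (g : V →ₗ[ℝ] V) v = 0 := by
      show g v = 0
      rw [hgv, h, zero_smul]
    rw [h1, Submodule.span_zero_singleton]
  have hαpos : 0 < |α| := abs_pos.2 hα
  have hmapv : Submodule.map (g : V →ₗ[ℝ] V) (Submodule.span ℝ {v})
      = Submodule.span ℝ {v} := by
    rw [Submodule.map_span, Set.image_singleton]
    have h1 : (g : V →ₗ[ℝ] V) v = α • v := hgv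
    rw [h1, Submodule.span_singleton_smul_eq (IsUnit.mk0 α hα)]
  have key3 : ∀ a : ℝ, 0 ≤ a → ∀ z₁ ∈ W, ‖z₁‖ = 1 → 2 * ε - |a - 1| ≤ ‖a • e - z₁‖ := by
    intro a ha z₁ hz₁ hz₁n
    have h4 : e - z₁ = (a • e - z₁) + (1 - a) • e := by module
    have h2 : ‖e - z₁‖ ≤ ‖a • e - z₁‖ + |a - 1| := by
      calc ‖e - z₁‖ = ‖(a • e - z₁) + (1 - a) • e‖ := by rw [← h4]
      _ ≤ ‖a • e - z₁‖ + ‖(1 - a) • e‖ := norm_add_le _ _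
      _ = ‖a • e - z₁‖ + |a - 1| := by
          rw [norm_smul, Real.norm_eq_abs, hen, mul_one, abs_sub_comm]
    have h5 := key z₁ hz₁ hz₁n
    linarith
  have key2 : ∀ (t : ℝ), ∀ w₂ ∈ W, ‖w₂‖ = 1 → 2 * ε - |(|t| - 1)| ≤ ‖t • e - w₂‖ := by
    intro t w₂ hw₂ hw₂n
    rcases le_or_gt 0 t with h | h
    · rw [abs_of_nonneg h]; exact key3 t h w₂ hw₂ hw₂n
    · have h1 : t • e - w₂ = -((-t) • e - (-w₂)) := by module
      rw [h1, norm_neg, abs_of_neg h]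
      exact key3 (-t) (by linarith) (-w₂) (Submodule.neg_mem _ hw₂)
        (by rw [norm_neg]; exact hw₂n)
  have hD : ∀ w ∈ W, ‖w‖ = 1 → ‖g w‖ ≤ 8 * |α| := by
    intro w hwW hwn
    have hw0 : w ≠ 0 := by intro h; rw [h, norm_zero] at hwn; norm_num at hwn
    set s : ℝ := ε / 9 with hs
    have hs0 : 0 < s := by rw [hs]; positivity
    have hs1 : s ≤ 1 / 9 := by rw [hs]; linarith
    set u : V := e + s • w with hu
    have hsw : ‖s • w‖ = s := by
      rw [norm_smul, Real.norm_eq_abs, abs_of_pos hs0, hwn, mul_one]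
    have huup : ‖u‖ ≤ 1 + s := by
      calc ‖u‖ ≤ ‖e‖ + ‖s • w‖ := norm_add_le _ _
      _ = 1 + s := by rw [hen, hsw]
    have hulow : 1 - s ≤ ‖u‖ := by
      have h1 : e = u - s • w := by rw [hu]; abel
      have h2 : ‖e‖ ≤ ‖u‖ + ‖s • w‖ := by rw [h1]; exact norm_sub_le _ _
      rw [hen, hsw] at h2; linarith
    have hupos : (0:ℝ) < ‖u‖ := by linarith
    have hu0 : u ≠ 0 := by intro h; rw [h, norm_zero] at hupos; exact lt_irrefl _ hupos
    have hur : Module.finrank ℝ (Submodule.span ℝ {u}) = 1 := finrank_span_singleton hu0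
    have huu : u ∈ Submodule.span ℝ {u} := Submodule.mem_span_singleton_self u
    have hδu : ε ≤ projDelta (Submodule.span ℝ {u}) W := by
      apply le_projDelta ⟨Submodule.span ℝ {w},
        (Submodule.span_singleton_le_iff_mem _ _).2 hwW, finrank_span_singleton hw0⟩
      intro y hy hyr
      have hy0 : y ≠ ⊥ := by intro h; rw [h, finrank_bot] at hyr; norm_num at hyr
      obtain ⟨q, hqy, hq0⟩ := Submodule.exists_mem_ne_zero_of_ne_bot hy0
      refine le_projDist (Submodule.smul_mem _ ‖u‖⁻¹ huu) (Submodule.smul_mem _ ‖q‖⁻¹ hqy)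
        (normInvSmul hu0) (normInvSmul hq0) ?_
      intro v₁ hv₁ v₂ hv₂ n₁ n₂
      obtain ⟨t, rfl⟩ := Submodule.mem_span_singleton.1 hv₁
      have hv₂W : v₂ ∈ W := hy hv₂
      have ht : |t| * ‖u‖ = 1 := by rw [← Real.norm_eq_abs, ← norm_smul]; exact n₁
      have ht0 : t ≠ 0 := by rintro rfl; rw [zero_smul, norm_zero] at n₁; norm_num at n₁
      have htpos : 0 < |t| := abs_pos.2 ht0
      have htle : |t| ≤ 9 / 8 := by
        nlinarith [mul_le_mul_of_nonneg_left
          (show (8:ℝ)/9 ≤ ‖u‖ by linarith) (abs_nonneg t)]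
      have htd : |(|t| - 1)| ≤ (9/8) * s := by
        have e9 : |t| - 1 = |t| * (1 - ‖u‖) := by rw [mul_sub, mul_one, ht]
        have habs : |1 - ‖u‖| ≤ s := abs_le.2 ⟨by linarith, by linarith⟩
        rw [e9, abs_mul, abs_abs]
        exact mul_le_mul htle habs (abs_nonneg _) (by norm_num)
      have e2' : t • e - v₂ = (t • u - v₂) - (t * s) • w := by rw [hu]; module
      have e3 : ‖(t * s) • w‖ ≤ (9/8) * s := by
        rw [norm_smul, Real.norm_eq_abs, hwn, mul_one, abs_mul, abs_of_pos hs0]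
        nlinarith
      have h6 := key2 t v₂ hv₂W n₂
      have h7 : ‖t • e - v₂‖ ≤ ‖t • u - v₂‖ + ‖(t * s) • w‖ := by
        rw [e2']; exact norm_sub_le _ _
      have hsval : s = ε / 9 := hs
      linarith
    have hlip' := hlip (Submodule.span ℝ {u}) (Submodule.span ℝ {v}) hur hsv hδu hdv
    set z : V := α • e + s • (g w) with hz
    have hgu : (g : V →ₗ[ℝ] V) u = z := by
      show g u = z
      rw [hu, hz, map_add, map_smul g s w, hge]
    have hmapu : Submodule.map (g : V →ₗ[ℝ] V) (Submodule.span ℝ {u})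
        = Submodule.span ℝ {z} := by
      rw [Submodule.map_span, Set.image_singleton, hgu]
    have hgwW : g w ∈ W := hgW' w hwW
    set m : ℝ := ‖g w‖ with hm
    have hm0 : 0 ≤ m := norm_nonneg _
    have hNlow : ε * |α| ≤ ‖z‖ := by
      have := B1 α (s • g w) (Submodule.smul_mem _ _ hgwW)
      rw [← hz] at this
      exact this
    have hNpos : 0 < ‖z‖ := lt_of_lt_of_le (by positivity) hNlow
    have hz0 : z ≠ 0 := by intro h; rw [h, norm_zero] at hNpos; exact lt_irrefl _ hNpos
    have hNup : ‖z‖ ≤ |α| + s * m := by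
      calc ‖z‖ ≤ ‖α • e‖ + ‖s • g w‖ := norm_add_le _ _
      _ = |α| + s * m := by
          have ha1 : ‖α • e‖ = |α| := by
            rw [norm_smul, hen, mul_one, Real.norm_eq_abs]
          have ha2 : ‖s • g w‖ = s * m := by
            rw [hm, norm_smul, Real.norm_eq_abs, abs_of_pos hs0]
          rw [ha1, ha2]
    have hlowd : ε * (s * m) / ((1 + ε) * ‖z‖)
        ≤ projDist (Submodule.span ℝ {z}) (Submodule.span ℝ {v}) := by
      refine le_projDist (Submodule.smul_mem _ ‖z‖⁻¹ (Submodule.mem_span_singleton_self z))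
        hemem (normInvSmul hz0) hen ?_
      intro v₁ hv₁ v₂ hv₂ n₁ n₂
      obtain ⟨t, rfl⟩ := Submodule.mem_span_singleton.1 hv₁
      rw [hspan] at hv₂
      obtain ⟨r, rfl⟩ := Submodule.mem_span_singleton.1 hv₂
      have ht : |t| * ‖z‖ = 1 := by rw [← Real.norm_eq_abs, ← norm_smul]; exact n₁
      have e4 : t • z - r • e = (t * α - r) • e + (t * s) • (g w) := by rw [hz]; module
      have h8 := B2 (t * α - r) ((t * s) • g w) (Submodule.smul_mem _ _ hgwW)
      rw [← e4] at h8
      have e5 : ‖(t * s) • g w‖ = |t| * (s * m) := by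
        rw [hm, norm_smul, Real.norm_eq_abs, abs_mul, abs_of_pos hs0]; ring
      rw [e5] at h8
      rw [div_le_iff₀ (by positivity)]
      have h9 := mul_le_mul_of_nonneg_right h8 hNpos.le
      have e6 : ε * (|t| * (s * m)) * ‖z‖ = ε * (s * m) * (|t| * ‖z‖) := by ring
      rw [e6, ht, mul_one] at h9
      nlinarith [h9]
    have hupd : projDist (Submodule.span ℝ {u}) (Submodule.span ℝ {v}) ≤ 2 * s := by
      have h9 : projDist (Submodule.span ℝ {u}) (Submodule.span ℝ {v}) ≤ ‖‖u‖⁻¹ • u - e‖ :=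
        projDist_le (Submodule.smul_mem _ _ huu) hemem (normInvSmul hu0) hen
      have h10 : ‖‖u‖⁻¹ • u - e‖ ≤ ‖‖u‖⁻¹ • u - u‖ + ‖u - e‖ :=
        norm_sub_le_norm_sub_add_norm_sub _ _ _
      have h11 : ‖u - e‖ = s := by
        have e10 : u - e = s • w := by rw [hu]; abel
        rw [e10, hsw]
      have h12 : ‖‖u‖⁻¹ • u - u‖ ≤ s := by
        have e6 : ‖u‖⁻¹ • u - u = (‖u‖⁻¹ - 1) • u := by rw [sub_smul, one_smul]
        have e77 : (‖u‖⁻¹ - 1) * ‖u‖ = 1 - ‖u‖ := by field_simp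
        calc ‖‖u‖⁻¹ • u - u‖ = |‖u‖⁻¹ - 1| * ‖u‖ := by rw [e6, norm_smul, Real.norm_eq_abs]
        _ = |(‖u‖⁻¹ - 1) * ‖u‖| := by rw [abs_mul, abs_of_pos hupos]
        _ = |1 - ‖u‖| := by rw [e77]
        _ ≤ s := abs_le.2 ⟨by linarith, by linarith⟩
      linarith
    have hchain : ε * (s * m) / ((1 + ε) * ‖z‖) ≤ ε * (2 * s) := by
      calc ε * (s * m) / ((1 + ε) * ‖z‖)
          ≤ projDist (Submodule.span ℝ {z}) (Submodule.span ℝ {v}) := hlowd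
      _ = projDist (Submodule.map (g : V →ₗ[ℝ] V) (Submodule.span ℝ {u}))
            (Submodule.map (g : V →ₗ[ℝ] V) (Submodule.span ℝ {v})) := by
          rw [hmapu, hmapv]
      _ ≤ ε * projDist (Submodule.span ℝ {u}) (Submodule.span ℝ {v}) := hlip'
      _ ≤ ε * (2 * s) := mul_le_mul_of_nonneg_left hupd hε.le
    rw [div_le_iff₀ (by positivity)] at hchain
    have hm4 : m ≤ 2 * (1 + ε) * ‖z‖ := by
      have hps : 0 < ε * s := mul_pos hε hs0
      have h' : ε * s * m ≤ ε * s * (2 * (1 + ε) * ‖z‖) := by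
        calc ε * s * m = ε * (s * m) := by ring
        _ ≤ ε * (2 * s) * ((1 + ε) * ‖z‖) := hchain
        _ = ε * s * (2 * (1 + ε) * ‖z‖) := by ring
      exact le_of_mul_le_mul_left h' hps
    have hm8 : m ≤ 8 * |α| := by
      have h13 : s * m ≤ (1/9) * m := mul_le_mul_of_nonneg_right hs1 hm0
      have h14 : 2 * (1 + ε) * ‖z‖ ≤ 4 * ‖z‖ :=
        mul_le_mul_of_nonneg_right (show 2 * (1 + ε) ≤ 4 by linarith) hNpos.le
      linarith
    exact hm8
  have hgle : ∀ w ∈ W, ‖g w‖ ≤ 8 * |α| * ‖w‖ := by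
    intro w hw
    rcases eq_or_ne w 0 with rfl | hw0
    · simp
    · have e8 : g w = ‖w‖ • g (‖w‖⁻¹ • w) := by
        rw [map_smul, smul_smul, mul_inv_cancel₀ (norm_ne_zero_iff.2 hw0), one_smul]
      rw [e8, norm_smul, Real.norm_eq_abs, abs_of_pos (norm_pos_iff.2 hw0)]
      have h := hD (‖w‖⁻¹ • w) (Submodule.smul_mem _ _ hw) (normInvSmul hw0)
      calc ‖w‖ * ‖g (‖w‖⁻¹ • w)‖ ≤ ‖w‖ * (8 * |α|) :=
        mul_le_mul_of_nonneg_left h (norm_nonneg w)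
      _ = 8 * |α| * ‖w‖ := by ring
  have hgnorm : ‖g‖ ≤ 17 * |α| / ε := by
    refine ContinuousLinearMap.opNorm_le_bound _ (by positivity) ?_
    intro x
    have hx : x ∈ Submodule.span ℝ {v} ⊔ W := by
      rw [hcompl.sup_eq_top]; exact Submodule.mem_top
    obtain ⟨p, hp, w, hw, rfl⟩ := Submodule.mem_sup.1 hx
    rw [hspan] at hp
    obtain ⟨t, rfl⟩ := Submodule.mem_span_singleton.1 hp
    have h1 := B1 t w hw
    have h2 := B2 t w hw
    have h3 : g (t • e + w) = (t * α) • e + g w := by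
      rw [map_add, map_smul, hge, smul_smul]
    have h4 : ‖g (t • e + w)‖ ≤ |t| * |α| + 8 * |α| * ‖w‖ := by
      rw [h3]
      calc ‖(t * α) • e + g w‖ ≤ ‖(t * α) • e‖ + ‖g w‖ := norm_add_le _ _
      _ ≤ |t| * |α| + 8 * |α| * ‖w‖ := by
          rw [norm_smul, Real.norm_eq_abs, hen, mul_one, abs_mul]
          exact add_le_add le_rfl (hgle w hw)
    rw [div_mul_eq_mul_div, le_div_iff₀ hε]
    have h5 : |α| * (ε * |t|) ≤ |α| * ‖t • e + w‖ :=
      mul_le_mul_of_nonneg_left h1 (abs_nonneg α)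
    have h7 : (1 + ε) * ‖t • e + w‖ ≤ 2 * ‖t • e + w‖ := by
      nlinarith [norm_nonneg (t • e + w)]
    have h6 : 8 * |α| * (ε * ‖w‖) ≤ 8 * |α| * (2 * ‖t • e + w‖) :=
      mul_le_mul_of_nonneg_left (le_trans h2 h7) (by positivity)
    nlinarith [mul_le_mul_of_nonneg_right h4 hε.le]
  have hgn : ∀ n : ℕ, (g ^ n) v = (α ^ n) • v := by
    intro n
    induction n with
    | zero => simp
    | succ n ih =>
      rw [pow_succ, ContinuousLinearMap.mul_apply, hgv, map_smul, ih, smul_smul,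
        ← pow_succ']
  have hgnlow : ∀ n : ℕ, |α| ^ n ≤ ‖g ^ n‖ := by
    intro n
    have h1 : ‖(g ^ n) v‖ = |α| ^ n * ‖v‖ := by
      rw [hgn, norm_smul, Real.norm_eq_abs, abs_pow]
    have h2 : ‖(g ^ n) v‖ ≤ ‖g ^ n‖ * ‖v‖ := (g ^ n).le_opNorm v
    rw [h1] at h2
    exact le_of_mul_le_mul_right h2 hvpos
  have hbddf : ∀ n : ℕ, ‖g ^ n‖ ^ ((1:ℝ) / n) ≤ max 1 ‖g‖ := by
    intro n
    rcases Nat.eq_zero_or_pos n with rfl | hn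
    · simp
    · have h1 : ‖g ^ n‖ ≤ ‖g‖ ^ n := norm_pow_le' g hn
      have h2 : ‖g ^ n‖ ^ ((1:ℝ) / n) ≤ (‖g‖ ^ n) ^ ((1:ℝ) / n) :=
        Real.rpow_le_rpow (norm_nonneg _) h1 (by positivity)
      have h3 : ((‖g‖ ^ n : ℝ)) ^ ((1:ℝ) / n) = ‖g‖ := by
        rw [← Real.rpow_natCast ‖g‖ n, ← Real.rpow_mul (norm_nonneg g), mul_one_div,
          div_self (Nat.cast_ne_zero.2 hn.ne'), Real.rpow_one]
      rw [h3] at h2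
      exact le_trans h2 (le_max_right _ _)
  have hlow : |α| ≤ specRad g := by
    rw [specRad]
    apply le_limsup_of_frequently_le
    · apply Filter.Eventually.frequently
      filter_upwards [Filter.eventually_ge_atTop 1] with n hn
      have hn0 : (n:ℝ) ≠ 0 := Nat.cast_ne_zero.2 (by omega)
      have h1 : (|α| ^ n : ℝ) ^ ((1:ℝ) / n) ≤ ‖g ^ n‖ ^ ((1:ℝ) / n) :=
        Real.rpow_le_rpow (by positivity) (hgnlow n) (by positivity)
      have h2 : ((|α| ^ n : ℝ)) ^ ((1:ℝ) / n) = |α| := by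
        rw [← Real.rpow_natCast |α| n, ← Real.rpow_mul (abs_nonneg α), mul_one_div,
          div_self hn0, Real.rpow_one]
      rw [h2] at h1
      exact h1
    · exact Filter.isBoundedUnder_of ⟨max 1 ‖g‖, hbddf⟩
  have hup : specRad g ≤ ‖g‖ := by
    rw [specRad]
    apply Filter.limsup_le_of_le
    · exact Filter.isCoboundedUnder_le_of_le Filter.atTop
        (fun n => by positivity)
    · filter_upwards [Filter.eventually_ge_atTop 1] with n hn
      have hn' : 0 < n := hn
      have h1 : ‖g ^ n‖ ≤ ‖g‖ ^ n := norm_pow_le' g hn'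
      calc ‖g ^ n‖ ^ ((1:ℝ) / n) ≤ (‖g‖ ^ n) ^ ((1:ℝ) / n) :=
        Real.rpow_le_rpow (norm_nonneg _) h1 (by positivity)
      _ = ‖g‖ := by
          rw [← Real.rpow_natCast ‖g‖ n, ← Real.rpow_mul (norm_nonneg g), mul_one_div,
            div_self (Nat.cast_ne_zero.2 hn'.ne'), Real.rpow_one]
  refine ⟨?_, hup⟩
  have hfinal : min (ε / 17) (1 / 2) * ‖g‖ ≤ |α| := by
    calc min (ε / 17) (1 / 2) * ‖g‖ ≤ (ε / 17) * ‖g‖ :=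
      mul_le_mul_of_nonneg_right (min_le_left _ _) (norm_nonneg g)
    _ ≤ (ε / 17) * (17 * |α| / ε) := mul_le_mul_of_nonneg_left hgnorm (by positivity)
    _ = |α| := by field_simp
  exact le_trans hfinal hlow
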